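/- arXiv:0803.3073 — 3 statements merged into one kernel-verified Lean document; each statement's English description precedes it below -/
import Mathlib

section
/- For real numbers x > 1 and y, we have y = ln x if and only if for every positive integer n, |U_n - y| \le (x^2 - 2x + 1)/(n x), where U_n = \sum_{k=0}^{n-1} ((x-1)/n) \cdot (1/(1 + k(x-1)/n)). -/
open intervalIntegral Finset

lemma riemann_key (x : ℝ) (hx : 1 < x) (n : ℕ) (hn : 0 < n) :
    0 ≤ (∑ k ∈ Finset.range n, ((x - 1) / n) * (1 / (1 + (k : ℝ) * (x - 1) / n))) - Real.log x ∧
    (∑ k ∈ Finset.range n, ((x - 1) / n) * (1 / (1 + (k : ℝ) * (x - 1) / n))) - Real.log x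
      ≤ (x - 1) ^ 2 / (n * x) := by
  have hn' : (0:ℝ) < n := Nat.cast_pos.mpr hn
  set h : ℝ := (x - 1) / n with hh
  have hh0 : 0 < h := div_pos (by linarith) hn'
  set a : ℕ → ℝ := fun k => 1 + k * h with ha
  have ha1 : ∀ k, 1 ≤ a k := by
    intro k
    have : (0:ℝ) ≤ k * h := mul_nonneg (Nat.cast_nonneg k) hh0.le
    simp only [ha]; linarith
  have hapos : ∀ k, 0 < a k := fun k => lt_of_lt_of_le one_pos (ha1 k)
  have hmono : ∀ k, a k ≤ a (k+1) := by
    intro k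
    simp only [ha]
    push_cast
    nlinarith
  have hstep : ∀ k, a (k+1) - a k = h := by
    intro k
    simp only [ha]
    push_cast
    ring
  have ha0 : a 0 = 1 := by simp [ha]
  have han : a n = x := by
    simp only [ha, hh]
    field_simp
    ring
  have hint : ∀ k, IntervalIntegrable (fun t => 1 / t) MeasureTheory.volume (a k) (a (k+1)) := by
    intro k
    apply ContinuousOn.intervalIntegrable
    apply ContinuousOn.div continuousOn_const continuousOn_id
    intro t ht
    rw [Set.uIcc_of_le (hmono k)] at ht
    have := (ha1 k).trans ht.1
    positivity
  have hlog : Real.log x = ∫ t in (1:ℝ)..x, 1/t := by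
    rw [integral_one_div]
    · simp
    · rw [Set.uIcc_of_le (by linarith : (1:ℝ) ≤ x)]
      intro hmem
      exact absurd hmem.1 (by norm_num)
  have hsum : ∑ k ∈ Finset.range n, (∫ t in a k..a (k+1), 1/t) = ∫ t in (1:ℝ)..x, 1/t := by
    have hs := sum_integral_adjacent_intervals (a := a) (μ := MeasureTheory.volume)
      (f := fun t => 1/t) (n := n) (fun k _ => hint k)
    rwa [ha0, han] at hs
  have hub : ∀ k, (∫ t in a k..a (k+1), 1/t) ≤ h * (1 / a k) := by
    intro k
    have hm := integral_mono_on (μ := MeasureTheory.volume) (f := fun t => 1/t)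
      (g := fun _ => 1 / a k) (hmono k) (hint k) intervalIntegrable_const
      (fun t ht => one_div_le_one_div_of_le (hapos k) ht.1)
    rwa [integral_const, hstep k, smul_eq_mul] at hm
  have hlb : ∀ k, h * (1 / a (k+1)) ≤ ∫ t in a k..a (k+1), 1/t := by
    intro k
    have hm := integral_mono_on (μ := MeasureTheory.volume) (f := fun _ => 1 / a (k+1))
      (g := fun t => 1/t) (hmono k) intervalIntegrable_const (hint k)
      (fun t ht => one_div_le_one_div_of_le (lt_of_lt_of_le (hapos k) ht.1) ht.2)
    rwa [integral_const, hstep k, smul_eq_mul] at hm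
  have hterm : ∀ k : ℕ, ((x - 1) / n) * (1 / (1 + (k : ℝ) * (x - 1) / n)) = h * (1 / a k) := by
    intro k
    simp only [ha, hh]
    rw [mul_div_assoc]
  have hre : (∑ k ∈ Finset.range n, ((x - 1) / n) * (1 / (1 + (k : ℝ) * (x - 1) / n))) - Real.log x
      = ∑ k ∈ Finset.range n, (h * (1 / a k) - ∫ t in a k..a (k+1), 1/t) := by
    rw [Finset.sum_sub_distrib, hsum, ← hlog]
    congr 1
    exact Finset.sum_congr rfl (fun k _ => hterm k)
  constructor
  · rw [hre]
    apply Finset.sum_nonneg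
    intro k _
    linarith [hub k]
  · rw [hre]
    have : ∑ k ∈ Finset.range n, (h * (1 / a k) - ∫ t in a k..a (k+1), 1/t)
        ≤ ∑ k ∈ Finset.range n, (h * (1 / a k) - h * (1 / a (k+1))) := by
      apply Finset.sum_le_sum
      intro k _
      linarith [hlb k]
    refine this.trans ?_
    have htel : ∑ k ∈ Finset.range n, (h * (1 / a k) - h * (1 / a (k+1)))
        = h * (1 / a 0) - h * (1 / a n) :=
      Finset.sum_range_sub' (fun k => h * (1 / a k)) n
    rw [htel, ha0, han, hh]
    have hx0 : (0:ℝ) < x := by linarith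
    apply le_of_eq
    field_simp

theorem stmt_2 (x y : ℝ) (hx : 1 < x) :
    y = Real.log x ↔
      ∀ n : ℕ, 0 < n →
        |(∑ k ∈ Finset.range n, ((x - 1) / n) * (1 / (1 + (k : ℝ) * (x - 1) / n))) - y| ≤
          (x ^ 2 - 2 * x + 1) / (n * x) := by
  have hxx : x ^ 2 - 2 * x + 1 = (x - 1) ^ 2 := by ring
  constructor
  · intro hy n hn
    obtain ⟨h1, h2⟩ := riemann_key x hx n hn
    rw [hy, hxx, abs_of_nonneg h1]
    exact h2
  · intro H
    by_contra hy
    have hd : 0 < |y - Real.log x| := abs_pos.mpr (sub_ne_zero.mpr hy)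
    have hC : 0 ≤ (x - 1) ^ 2 / x := by positivity
    obtain ⟨n, hnlt⟩ := exists_nat_gt (2 * ((x - 1) ^ 2 / x) / |y - Real.log x|)
    have hn : 0 < n := by
      by_contra hn0
      push_neg at hn0
      interval_cases n
      simp at hnlt
      nlinarith [div_nonneg (by positivity : (0:ℝ) ≤ 2 * ((x-1)^2/x)) hd.le]
    have hn' : (0:ℝ) < n := Nat.cast_pos.mpr hn
    obtain ⟨h1, h2⟩ := riemann_key x hx n hn
    have hU := H n hn
    rw [hxx] at hU
    have habs : |y - Real.log x| ≤ 2 * ((x - 1) ^ 2 / (n * x)) := by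
      have := abs_sub_abs_le_abs_sub (y : ℝ) (Real.log x)
      have h3 : |(∑ k ∈ Finset.range n, ((x - 1) / n) * (1 / (1 + (k : ℝ) * (x - 1) / n))) - Real.log x| ≤ (x - 1) ^ 2 / (n * x) := by
        rw [abs_of_nonneg h1]; exact h2
      calc |y - Real.log x| ≤ |y - (∑ k ∈ Finset.range n, ((x - 1) / n) * (1 / (1 + (k : ℝ) * (x - 1) / n)))| + |(∑ k ∈ Finset.range n, ((x - 1) / n) * (1 / (1 + (k : ℝ) * (x - 1) / n))) - Real.log x| := abs_sub_le _ _ _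
        _ ≤ (x - 1) ^ 2 / (n * x) + (x - 1) ^ 2 / (n * x) := by
            rw [abs_sub_comm]
            exact add_le_add hU h3
        _ = 2 * ((x - 1) ^ 2 / (n * x)) := by ring
    have hfin : 2 * ((x - 1) ^ 2 / (n * x)) < |y - Real.log x| := by
      rw [div_lt_iff₀ hd] at hnlt
      have hx0 : (0:ℝ) < x := by linarith
      have e1 : (n:ℝ) * (2 * ((x - 1) ^ 2 / (↑n * x))) = 2 * ((x - 1) ^ 2 / x) := by
        field_simp
      have e2 := mul_le_mul_of_nonneg_left habs hn'.le
      linarith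
    linarith
end

section
/- If p(x,y) is a real polynomial in two variables such that p(x, e^x) = 0 for all real x, then p is the zero polynomial. -/
open Filter Topology Real Polynomial Finset

-- A real polynomial whose values tend to 0 at +∞ is zero.
lemma poly_zero_of_tendsto (P : ℝ[X])
    (h : Tendsto (fun x => P.eval x) atTop (nhds 0)) : P = 0 := by
  by_cases hdeg : 0 < P.degree
  · exfalso
    have h1 := Polynomial.abs_tendsto_atTop P hdeg
    have h2 : Tendsto (fun x => |P.eval x|) atTop (nhds 0) := by
      simpa using h.abs
    exact not_tendsto_nhds_of_tendsto_atTop h1 0 h2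
  · have : P = Polynomial.C (P.coeff 0) := Polynomial.eq_C_of_degree_le_zero (le_of_not_gt hdeg)
    rw [this] at h ⊢
    simp only [Polynomial.eval_C] at h
    have := tendsto_nhds_unique h tendsto_const_nhds
    rw [← this]; simp

lemma aux_tendsto (P : ℝ[X]) (k : ℕ) :
    Tendsto (fun x => P.eval x * ((Real.exp x)⁻¹ ^ (k + 1))) atTop (nhds 0) := by
  induction k with
  | zero =>
      simpa [div_eq_mul_inv] using P.tendsto_div_exp_atTop
  | succ k ih =>
      have h2 : Tendsto (fun x : ℝ => (Real.exp x)⁻¹) atTop (nhds 0) := by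
        simpa [Real.exp_neg] using Real.tendsto_exp_neg_atTop_nhds_zero
      have := ih.mul h2
      simp only [mul_zero] at this
      refine this.congr fun x => ?_
      ring

lemma key (N : ℕ) : ∀ Q : Polynomial ℝ[X], Q.natDegree ≤ N →
    (∀ x : ℝ, ∑ i ∈ Finset.range (N + 1), (Q.coeff i).eval x * Real.exp x ^ i = 0) →
    Q = 0 := by
  induction N with
  | zero =>
      intro Q hdeg h
      have h0 : Q.coeff 0 = 0 := by
        apply Polynomial.funext
        intro r
        simpa using h r
      have : Q = Polynomial.C (Q.coeff 0) := Polynomial.eq_C_of_natDegree_le_zero hdeg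
      rw [this, h0]; simp
  | succ N ih =>
      intro Q hdeg h
      -- top coefficient vanishes
      have hc : Q.coeff (N + 1) = 0 := by
        apply poly_zero_of_tendsto
        have heq : ∀ x : ℝ, (Q.coeff (N + 1)).eval x =
            ∑ i ∈ Finset.range (N + 1),
              -((Q.coeff i).eval x * ((Real.exp x)⁻¹ ^ (N + 1 - i))) := by
          intro x
          have hx := h x
          rw [Finset.sum_range_succ] at hx
          have hexp : (Real.exp x) ^ (N + 1) ≠ 0 := pow_ne_zero _ (Real.exp_ne_zero x)
          have : (Q.coeff (N + 1)).eval x = -(∑ i ∈ Finset.range (N + 1),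
              (Q.coeff i).eval x * Real.exp x ^ i) / Real.exp x ^ (N + 1) := by
            field_simp
            linarith [hx]
          rw [this, ← Finset.sum_neg_distrib, Finset.sum_div]
          apply Finset.sum_congr rfl
          intro i hi
          rw [Finset.mem_range] at hi
          have hkey : ((Real.exp x)⁻¹ ^ (N + 1 - i)) * Real.exp x ^ (N + 1) = Real.exp x ^ i := by
            rw [inv_pow, inv_mul_eq_div, eq_comm, eq_div_iff (pow_ne_zero _ (Real.exp_ne_zero x)),
              ← pow_add]
            congr 1
            omega
          rw [div_eq_iff hexp, ← hkey]
          ring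
        have : Tendsto (fun x => ∑ i ∈ Finset.range (N + 1),
            -((Q.coeff i).eval x * ((Real.exp x)⁻¹ ^ (N + 1 - i)))) atTop (nhds 0) := by
          have : Tendsto (fun x => ∑ i ∈ Finset.range (N + 1),
              -((Q.coeff i).eval x * ((Real.exp x)⁻¹ ^ (N + 1 - i)))) atTop
              (nhds (∑ i ∈ Finset.range (N + 1), -(0:ℝ))) := by
            apply tendsto_finset_sum
            intro i hi
            rw [Finset.mem_range] at hi
            have hk : N + 1 - i = (N - i) + 1 := by omega
            rw [hk]
            exact ((aux_tendsto (Q.coeff i) (N - i)).neg).congr (fun x => by ring_nf)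
          simpa using this
        exact Tendsto.congr (fun x => (heq x).symm) this
      -- now reduce degree
      have hdeg' : Q.natDegree ≤ N := by
        rw [Polynomial.natDegree_le_iff_coeff_eq_zero]
        intro m hm
        rcases eq_or_lt_of_le (Nat.succ_le_of_lt hm) with h1 | h1
        · rw [← h1]; exact hc
        · exact Polynomial.coeff_eq_zero_of_natDegree_lt (lt_of_le_of_lt hdeg h1)
      apply ih Q hdeg'
      intro x
      have hx := h x
      rw [Finset.sum_range_succ, hc] at hx
      simpa using hx

theorem stmt_12 (p : MvPolynomial (Fin 2) ℝ)
    (h : ∀ x : ℝ, MvPolynomial.eval ![x, Real.exp x] p = 0) : p = 0 := by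
  set q : MvPolynomial (Fin 2) ℝ := MvPolynomial.rename (Equiv.swap 0 1) p with hq
  have hq0 : ∀ x : ℝ, MvPolynomial.eval ![Real.exp x, x] q = 0 := by
    intro x
    rw [hq, MvPolynomial.eval_rename]
    have hfun : (![Real.exp x, x] ∘ (Equiv.swap (0 : Fin 2) 1)) = ![x, Real.exp x] := by
      funext i
      fin_cases i <;> simp [Equiv.swap_apply_left, Equiv.swap_apply_right]
    rw [hfun]
    exact h x
  set Q2 := MvPolynomial.finSuccEquiv ℝ 1 q with hQ2
  have hev : ∀ x : ℝ, Polynomial.eval (Real.exp x)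
      (Polynomial.map (MvPolynomial.eval ![x]) Q2) = 0 := by
    intro x
    rw [hQ2, ← MvPolynomial.eval_eq_eval_mv_eval']
    exact hq0 x
  set A : MvPolynomial (Fin 1) ℝ →+* ℝ[X] :=
    (MvPolynomial.aeval (fun _ : Fin 1 => (Polynomial.X : ℝ[X]))).toRingHom with hAdef
  have hA : ∀ (c : MvPolynomial (Fin 1) ℝ) (x : ℝ),
      Polynomial.eval x (A c) = MvPolynomial.eval ![x] c := by
    intro c x
    have hcomp : (Polynomial.aeval x).comp
        (MvPolynomial.aeval fun _ : Fin 1 => (Polynomial.X : ℝ[X]))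
        = MvPolynomial.aeval (fun _ : Fin 1 => x) := by
      rw [MvPolynomial.comp_aeval]
      simp
    have h1 : Polynomial.eval x (A c) = MvPolynomial.aeval (fun _ : Fin 1 => x) c := by
      rw [← hcomp]
      simp [hAdef, Polynomial.coe_aeval_eq_eval]
    rw [h1]
    have h2 : ![x] = (fun _ : Fin 1 => x) := by
      funext i
      fin_cases i
      simp
    rw [h2]
    rw [show (MvPolynomial.aeval (fun _ : Fin 1 => x)) c
      = MvPolynomial.eval (fun _ : Fin 1 => x) c from by
        rw [← MvPolynomial.coe_aeval_eq_eval]; rfl]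
  set Q : Polynomial ℝ[X] := Q2.map A with hQ
  have hQzero : Q = 0 := by
    apply key Q2.natDegree Q Polynomial.natDegree_map_le
    intro x
    have hlt : (Polynomial.map (MvPolynomial.eval ![x]) Q2).natDegree < Q2.natDegree + 1 :=
      Nat.lt_succ_of_le Polynomial.natDegree_map_le
    have := hev x
    rw [Polynomial.eval_eq_sum_range' hlt] at this
    rw [← this]
    apply Finset.sum_congr rfl
    intro i _
    rw [hQ, Polynomial.coeff_map, Polynomial.coeff_map, hA]
  have hQ2zero : Q2 = 0 := by
    ext i j
    have : A (Q2.coeff i) = 0 := by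
      have := congrArg (fun r => Polynomial.coeff r i) hQzero
      simpa [hQ, Polynomial.coeff_map] using this
    have hz : Q2.coeff i = 0 := by
      apply MvPolynomial.funext
      intro v
      have hv : v = ![v 0] := by
        funext j
        fin_cases j
        simp
      rw [hv, ← hA, this]
      simp
    simp [hz]
  have hqzero : q = 0 := by
    have := (MvPolynomial.finSuccEquiv ℝ 1).injective (a₁ := q) (a₂ := 0)
    apply this
    rw [← hQ2, hQ2zero]
    simp
  have := MvPolynomial.rename_injective (R := ℝ) (Equiv.swap (0 : Fin 2) 1)
    (Equiv.injective _) (a₁ := p) (a₂ := 0)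
  apply this
  rw [← hq, hqzero]
  simp
end

section
/- If a function f : \mathbb{R} \to \mathbb{R} has a graph that is a countable union of semialgebraic subsets of \mathbb{R}^2, then there exists an interval (a,b) with a < b on which f agrees with a semialgebraic function; in particular f is not equal to e^x, since exp restricted to any nontrivial interval is not semialgebraic. -/
def IsBasicSemialgebraicR2 (s : Set (ℝ × ℝ)) : Prop :=
  ∃ E I : Finset (MvPolynomial (Fin 2) ℝ),
    s = {p : ℝ × ℝ |
      (∀ q ∈ E, MvPolynomial.eval ![p.1, p.2] q = 0) ∧
      ∀ q ∈ I, 0 < MvPolynomial.eval ![p.1, p.2] q}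

def IsSemialgebraicR2 (s : Set (ℝ × ℝ)) : Prop :=
  ∃ (n : ℕ) (f : Fin n → Set (ℝ × ℝ)), (∀ i, IsBasicSemialgebraicR2 (f i)) ∧ s = ⋃ i, f i

open Set Filter Topology Polynomial

private lemma cont_eval (q : MvPolynomial (Fin 2) ℝ) :
    Continuous fun p : ℝ × ℝ => MvPolynomial.eval ![p.1, p.2] q := by
  have h1 : Continuous fun p : ℝ × ℝ => (![p.1, p.2] : Fin 2 → ℝ) := by
    refine continuous_pi fun i => ?_
    fin_cases i
    · exact continuous_fst
    · exact continuous_snd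
  exact (MvPolynomial.continuous_eval (p := q)).comp h1

private lemma part1 (f : ℝ → ℝ)
    (h : ∃ A : ℕ → Set (ℝ × ℝ), (∀ n, IsSemialgebraicR2 (A n)) ∧
      {p : ℝ × ℝ | p.2 = f p.1} = ⋃ n, A n) :
    ∃ a b : ℝ, a < b ∧
      IsSemialgebraicR2 {p : ℝ × ℝ | p.1 ∈ Set.Ioo a b ∧ p.2 = f p.1} := by
  classical
  obtain ⟨A, hA, hgraph⟩ := h
  choose m fam hbasic hAeq using hA
  choose E I hEI using hbasic
  -- the closed pieces
  let T : (Σ n : ℕ, Fin (m n)) → ℕ → ℕ → Set (ℝ × ℝ) := fun k m' M =>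
    {p : ℝ × ℝ | (∀ q ∈ E k.1 k.2, MvPolynomial.eval ![p.1, p.2] q = 0) ∧
      (∀ q ∈ I k.1 k.2, 1 / (m' + 1 : ℝ) ≤ MvPolynomial.eval ![p.1, p.2] q) ∧
      |p.1| ≤ M ∧ |p.2| ≤ M}
  have hTclosed : ∀ k m' M, IsClosed (T k m' M) := by
    intro k m' M
    have e1 : T k m' M =
        (⋂ q ∈ E k.1 k.2, {p : ℝ × ℝ | MvPolynomial.eval ![p.1, p.2] q = 0}) ∩
        ((⋂ q ∈ I k.1 k.2, {p : ℝ × ℝ | 1 / (m' + 1 : ℝ) ≤ MvPolynomial.eval ![p.1, p.2] q}) ∩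
        ({p : ℝ × ℝ | |p.1| ≤ (M : ℝ)} ∩ {p : ℝ × ℝ | |p.2| ≤ (M : ℝ)})) := by
      ext p
      simp only [T, mem_setOf_eq, mem_inter_iff, mem_iInter]
    rw [e1]
    refine (isClosed_biInter fun q _ => isClosed_eq (cont_eval q) continuous_const).inter
      ((isClosed_biInter fun q _ => isClosed_le continuous_const (cont_eval q)).inter
        (((isClosed_le (continuous_abs.comp continuous_fst) continuous_const)).inter
          ((isClosed_le (continuous_abs.comp continuous_snd) continuous_const))))
  have hTcompact : ∀ k m' M, IsCompact (T k m' M) := by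
    intro k m' M
    refine ((isCompact_Icc (a := (-M : ℝ)) (b := (M : ℝ))).prod
      (isCompact_Icc (a := (-M : ℝ)) (b := (M : ℝ)))).of_isClosed_subset (hTclosed k m' M) ?_
    rintro ⟨x, y⟩ ⟨-, -, hx, hy⟩
    exact ⟨abs_le.1 hx, abs_le.1 hy⟩
  let B : ((Σ n : ℕ, Fin (m n)) × ℕ × ℕ) → Set ℝ := fun j => Prod.fst '' T j.1 j.2.1 j.2.2
  have hBclosed : ∀ j, IsClosed (B j) := fun j =>
    ((hTcompact j.1 j.2.1 j.2.2).image continuous_fst).isClosed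
  have hBcover : ⋃ j, B j = univ := by
    refine eq_univ_of_forall fun x => mem_iUnion.2 ?_
    have hx : (x, f x) ∈ ⋃ n, A n := by
      rw [← hgraph]; exact rfl
    obtain ⟨n, hn⟩ := mem_iUnion.1 hx
    rw [hAeq n] at hn
    obtain ⟨i, hi⟩ := mem_iUnion.1 hn
    rw [hEI n i] at hi
    obtain ⟨heq, hineq⟩ := hi
    -- find m'
    set vals : Finset ℝ :=
      insert (1 : ℝ) ((I n i).image fun q => MvPolynomial.eval ![x, f x] q) with hvals
    have hne : vals.Nonempty := Finset.insert_nonempty _ _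
    have hδpos : 0 < vals.min' hne := by
      rw [Finset.lt_min'_iff]
      intro y hy
      rcases Finset.mem_insert.1 hy with rfl | hy
      · norm_num
      · obtain ⟨q, hq, rfl⟩ := Finset.mem_image.1 hy
        exact hineq q hq
    obtain ⟨m', hm'⟩ := exists_nat_one_div_lt hδpos
    set M : ℕ := ⌈max |x| |f x|⌉₊ with hM
    refine ⟨⟨⟨n, i⟩, m', M⟩, ⟨(x, f x), ⟨heq, ?_, ?_, ?_⟩, rfl⟩⟩
    · intro q hq
      refine le_trans hm'.le (Finset.min'_le _ _ ?_)
      exact Finset.mem_insert_of_mem (Finset.mem_image_of_mem _ hq)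
    · exact le_trans (le_max_left _ _) (Nat.le_ceil _)
    · exact le_trans (le_max_right _ _) (Nat.le_ceil _)
  obtain ⟨⟨⟨n, i⟩, m', M⟩, hint⟩ := nonempty_interior_of_iUnion_of_closed hBclosed hBcover
  obtain ⟨x₀, hx₀⟩ := hint
  rw [mem_interior_iff_mem_nhds, Metric.mem_nhds_iff] at hx₀
  obtain ⟨ε, hε, hball⟩ := hx₀
  rw [Real.ball_eq_Ioo] at hball
  set a := x₀ - ε with ha
  set b := x₀ + ε with hb
  have hab : a < b := by simp [ha, hb]; linarith
  have key : ∀ x ∈ Ioo a b, (x, f x) ∈ fam n i ∧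
      ∀ q ∈ I n i, 0 < MvPolynomial.eval ![x, f x] q := by
    intro x hx
    obtain ⟨⟨x', y⟩, hT, hxy⟩ := hball hx
    obtain rfl : x = x' := hxy.symm
    have hmem : (x, y) ∈ fam n i := by
      rw [hEI n i]
      refine ⟨hT.1, fun q hq => lt_of_lt_of_le ?_ (hT.2.1 q hq)⟩
      positivity
    have hgr : (x, y) ∈ {p : ℝ × ℝ | p.2 = f p.1} := by
      rw [hgraph]
      exact mem_iUnion.2 ⟨n, (hAeq n) ▸ mem_iUnion.2 ⟨i, hmem⟩⟩
    have hy : y = f x := hgr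
    subst hy
    rw [hEI n i] at hmem
    refine ⟨by rw [hEI n i]; exact hmem, fun q hq => hmem.2 q hq⟩
  refine ⟨a, b, hab, ?_⟩
  set S := {p : ℝ × ℝ | p.1 ∈ Set.Ioo a b ∧ p.2 = f p.1} with hS
  refine ⟨1, fun _ => S, fun _ => ?_, (Set.iUnion_const S).symm⟩
  refine ⟨E n i, insert (MvPolynomial.X 0 - MvPolynomial.C a)
      (insert (MvPolynomial.C b - MvPolynomial.X 0) (I n i)), ?_⟩
  have heval1 : ∀ p : ℝ × ℝ,
      MvPolynomial.eval ![p.1, p.2] (MvPolynomial.X 0 - MvPolynomial.C a) = p.1 - a := by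
    intro p; simp
  have heval2 : ∀ p : ℝ × ℝ,
      MvPolynomial.eval ![p.1, p.2] (MvPolynomial.C b - MvPolynomial.X 0) = b - p.1 := by
    intro p; simp
  ext p
  constructor
  · rintro ⟨hIoo, hp2⟩
    obtain ⟨hmem, hpos⟩ := key p.1 hIoo
    rw [hEI n i] at hmem
    have hp : (p.1, f p.1) = p := by
      rw [← hp2]
    rw [hp] at hmem
    refine ⟨hmem.1, fun q hq => ?_⟩
    rcases Finset.mem_insert.1 hq with rfl | hq
    · rw [heval1]; simpa using hIoo.1
    rcases Finset.mem_insert.1 hq with rfl | hq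
    · rw [heval2]; simpa using hIoo.2
    · exact hmem.2 q hq
  · rintro ⟨heqs, hins⟩
    have h1 : 0 < p.1 - a := by
      have := hins _ (Finset.mem_insert_self _ _)
      rwa [heval1] at this
    have h2 : 0 < b - p.1 := by
      have := hins _ (Finset.mem_insert_of_mem (Finset.mem_insert_self _ _))
      rwa [heval2] at this
    have hmem : p ∈ fam n i := by
      rw [hEI n i]
      exact ⟨heqs, fun q hq =>
        hins q (Finset.mem_insert_of_mem (Finset.mem_insert_of_mem hq))⟩
    have hgr : p ∈ {p : ℝ × ℝ | p.2 = f p.1} := by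
      rw [hgraph]
      exact mem_iUnion.2 ⟨n, (hAeq n) ▸ mem_iUnion.2 ⟨i, hmem⟩⟩
    exact ⟨⟨by linarith, by linarith⟩, hgr⟩

private noncomputable def Phi : MvPolynomial (Fin 2) ℝ →+* Polynomial (Polynomial ℝ) :=
  MvPolynomial.eval₂Hom ((Polynomial.C : Polynomial ℝ →+* Polynomial (Polynomial ℝ)).comp
    (Polynomial.C : ℝ →+* Polynomial ℝ))
    ![Polynomial.C Polynomial.X, Polynomial.X]

private lemma eval_Phi (q : MvPolynomial (Fin 2) ℝ) (x y : ℝ) :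
    MvPolynomial.eval ![x, y] q =
      Polynomial.eval y ((Phi q).map (Polynomial.evalRingHom x)) := by
  have key : (MvPolynomial.eval ![x, y] : MvPolynomial (Fin 2) ℝ →+* ℝ) =
      ((Polynomial.evalRingHom y).comp
        ((Polynomial.mapRingHom (Polynomial.evalRingHom x)).comp Phi)) := by
    apply MvPolynomial.ringHom_ext
    · intro r
      simp [Phi]
    · intro i
      fin_cases i <;> simp [Phi]
  exact DFunLike.congr_fun key q

private noncomputable def Psi : Polynomial (Polynomial ℝ) →+* MvPolynomial (Fin 2) ℝ :=
  Polynomial.eval₂RingHom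
    (Polynomial.eval₂RingHom (MvPolynomial.C : ℝ →+* MvPolynomial (Fin 2) ℝ)
      (MvPolynomial.X 0)) (MvPolynomial.X 1)

private lemma Phi_eq_zero {q : MvPolynomial (Fin 2) ℝ} (h : Phi q = 0) : q = 0 := by
  have key : (Psi.comp Phi) = RingHom.id (MvPolynomial (Fin 2) ℝ) := by
    apply MvPolynomial.ringHom_ext
    · intro r
      simp [Phi, Psi]
    · intro i
      fin_cases i <;> simp [Phi, Psi]
  have : Psi (Phi q) = q := DFunLike.congr_fun key q
  rw [h, map_zero] at this
  exact this.symm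

private lemma exp_poly_zero (q : MvPolynomial (Fin 2) ℝ)
    (h : ∀ x : ℝ, MvPolynomial.eval ![x, Real.exp x] q = 0) : q = 0 := by
  by_contra hq
  have hP : Phi q ≠ 0 := fun h0 => hq (Phi_eq_zero h0)
  set P := Phi q with hPdef
  set d := P.natDegree with hd
  have hsum : ∀ x : ℝ, ∑ k ∈ Finset.range (d + 1),
      (P.coeff k).eval x * Real.exp x ^ k = 0 := by
    intro x
    have h0 := h x
    rw [eval_Phi] at h0
    rw [Polynomial.eval_eq_sum_range'
      (lt_of_le_of_lt Polynomial.natDegree_map_le (Nat.lt_succ_self d))] at h0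
    simpa [Polynomial.coeff_map] using h0
  have hld : ∀ x : ℝ, (P.coeff d).eval x =
      -∑ k ∈ Finset.range d, (P.coeff k).eval x * Real.exp x ^ k / Real.exp x ^ d := by
    intro x
    have h0 := hsum x
    rw [Finset.sum_range_succ] at h0
    have hexp : Real.exp x ^ d ≠ 0 := pow_ne_zero _ (Real.exp_ne_zero x)
    rw [← Finset.sum_div, neg_div', eq_div_iff hexp]
    · linarith
  have hterm : ∀ k, k < d → Tendsto
      (fun x : ℝ => (P.coeff k).eval x * Real.exp x ^ k / Real.exp x ^ d) atTop (𝓝 0) := by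
    intro k hk
    have heq : ∀ x : ℝ, (P.coeff k).eval x * Real.exp x ^ k / Real.exp x ^ d =
        ((P.coeff k).eval x / Real.exp x) * (Real.exp x ^ (k + 1) / Real.exp x ^ d) := by
      intro x
      have hx := Real.exp_ne_zero x
      field_simp
      ring
    have hg : Tendsto (fun x : ℝ => |(P.coeff k).eval x / Real.exp x|) atTop (𝓝 0) := by
      simpa using ((P.coeff k).tendsto_div_exp_atTop).abs
    refine squeeze_zero_norm' ?_ hg
    filter_upwards [eventually_ge_atTop (0 : ℝ)] with x hx
    rw [heq]
    have h1 : (1 : ℝ) ≤ Real.exp x := Real.one_le_exp hx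
    have h2 : Real.exp x ^ (k + 1) ≤ Real.exp x ^ d :=
      pow_le_pow_right₀ h1 (by omega)
    have h3 : (0 : ℝ) < Real.exp x ^ d := pow_pos (Real.exp_pos x) d
    have h4 : |Real.exp x ^ (k + 1) / Real.exp x ^ d| ≤ 1 := by
      rw [abs_of_nonneg (by positivity)]
      rw [div_le_one h3]
      exact h2
    calc ‖(P.coeff k).eval x / Real.exp x * (Real.exp x ^ (k + 1) / Real.exp x ^ d)‖
        = |(P.coeff k).eval x / Real.exp x| * |Real.exp x ^ (k + 1) / Real.exp x ^ d| := by
          rw [Real.norm_eq_abs, abs_mul]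
      _ ≤ |(P.coeff k).eval x / Real.exp x| * 1 :=
          mul_le_mul_of_nonneg_left h4 (abs_nonneg _)
      _ = |(P.coeff k).eval x / Real.exp x| := mul_one _
  have hlim : Tendsto (fun x : ℝ => (P.coeff d).eval x) atTop (𝓝 0) := by
    have hsumlim : Tendsto (fun x : ℝ => ∑ k ∈ Finset.range d,
        (P.coeff k).eval x * Real.exp x ^ k / Real.exp x ^ d) atTop (𝓝 0) := by
      have := tendsto_finset_sum (Finset.range d)
        (fun k hk => hterm k (Finset.mem_range.1 hk))
      simpa using this
    have := hsumlim.neg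
    rw [neg_zero] at this
    exact this.congr fun x => (hld x).symm
  have hcd : P.coeff d ≠ 0 := by
    rw [hd]
    exact Polynomial.leadingCoeff_ne_zero.2 hP
  rcases lt_or_ge 0 (P.coeff d).degree with hdeg | hdeg
  · exact not_tendsto_nhds_of_tendsto_atTop
      (Polynomial.abs_tendsto_atTop _ hdeg) 0 (by simpa using hlim.abs)
  · have hc := Polynomial.eq_C_of_degree_le_zero hdeg
    have hconst : Tendsto (fun _ : ℝ => (P.coeff d).coeff 0) atTop (𝓝 0) := by
      refine hlim.congr fun x => ?_
      conv_lhs => rw [hc]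
      simp
    have hc0 : (P.coeff d).coeff 0 = 0 := tendsto_nhds_unique tendsto_const_nhds hconst
    exact hcd (by rw [hc, hc0, map_zero])

private lemma exp_not_semialg (a b : ℝ) (hab : a < b) :
    ¬ IsSemialgebraicR2 {p : ℝ × ℝ | p.1 ∈ Set.Ioo a b ∧ p.2 = Real.exp p.1} := by
  rintro ⟨n, s, hbasic, hS⟩
  set S := {p : ℝ × ℝ | p.1 ∈ Set.Ioo a b ∧ p.2 = Real.exp p.1} with hSdef
  let P : Fin n → Set ℝ := fun i => {x | x ∈ Ioo a b ∧ (x, Real.exp x) ∈ s i}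
  have hcover : Ioo a b ⊆ ⋃ i, P i := by
    intro x hx
    have hmem : (x, Real.exp x) ∈ S := ⟨hx, rfl⟩
    rw [hS] at hmem
    obtain ⟨i, hi⟩ := mem_iUnion.1 hmem
    exact mem_iUnion.2 ⟨i, hx, hi⟩
  have hinf : ∃ i, (P i).Infinite := by
    by_contra hfin
    push_neg at hfin
    try simp only [Set.not_infinite] at hfin
    exact Set.Ioo_infinite hab ((Set.finite_iUnion hfin).subset hcover)
  obtain ⟨i, hPinf⟩ := hinf
  obtain ⟨Ei, Ii, hsi⟩ := hbasic i
  by_cases hE : ∃ q ∈ Ei, q ≠ 0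
  · obtain ⟨q, hqE, hq0⟩ := hE
    set g : ℝ → ℝ := fun x => MvPolynomial.eval ![x, Real.exp x] q with hgdef
    have hganal : AnalyticOnNhd ℝ g univ := by
      have h1 : ∀ j : Fin 2, AnalyticOnNhd ℝ
          (fun x : ℝ => (![x, Real.exp x] : Fin 2 → ℝ) j) univ := by
        intro j
        fin_cases j
        · simpa using analyticOnNhd_id (𝕜 := ℝ) (E := ℝ)
        · simpa using analyticOnNhd_rexp
      have h2 := AnalyticOnNhd.aeval_mvPolynomial
        (𝕜 := ℝ) (f := fun x : ℝ => ![x, Real.exp x]) h1 q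
      have h3 : ∀ x : ℝ, MvPolynomial.aeval ![x, Real.exp x] q = g x := by
        intro x
        rw [hgdef]
        simp [MvPolynomial.aeval_def]
      exact fun x hx => ((h2 x hx).congr (by
        filter_upwards with z using h3 z))
    have hgz : ∀ x ∈ P i, g x = 0 := by
      intro x hx
      have := hx.2
      rw [hsi] at this
      exact this.1 q hqE
    have hsub : P i ⊆ Icc a b := fun x hx => Ioo_subset_Icc_self hx.1
    obtain ⟨z₀, hz₀K, hz₀⟩ := hPinf.exists_accPt_of_subset_isCompact isCompact_Icc hsub
    have hfreq : ∃ᶠ z in 𝓝[≠] z₀, g z = 0 := by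
      have hne : (𝓝[≠] z₀ ⊓ 𝓟 (P i)).NeBot := hz₀
      have : ∃ᶠ z in 𝓝[≠] z₀, z ∈ P i := by
        rw [Filter.frequently_iff_neBot]
        simpa [Filter.inf_principal] using hne
      exact this.mono fun z hz => hgz z hz
    have hgzero : EqOn g 0 univ :=
      hganal.eqOn_zero_of_preconnected_of_frequently_eq_zero isPreconnected_univ
        (mem_univ z₀) hfreq
    have : q = 0 := exp_poly_zero q fun x => hgzero (mem_univ x)
    exact hq0 this
  · push_neg at hE
    have hopen : IsOpen (s i) := by
      have e1 : s i = ⋂ q ∈ Ii, {p : ℝ × ℝ | 0 < MvPolynomial.eval ![p.1, p.2] q} := by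
        rw [hsi]
        ext p
        simp only [mem_setOf_eq, mem_iInter]
        constructor
        · exact fun h => h.2
        · intro h
          refine ⟨fun q hq => ?_, h⟩
          rw [hE q hq]
          simp
      rw [e1]
      exact isOpen_biInter_finset fun q _ =>
        isOpen_lt continuous_const (cont_eval q)
    obtain ⟨x₀, hx₀⟩ := hPinf.nonempty
    have hmem : (x₀, Real.exp x₀) ∈ s i := hx₀.2
    have hcont : Continuous fun t : ℝ => ((x₀, Real.exp x₀ + t) : ℝ × ℝ) := by
      fun_prop
    have hVopen : IsOpen ((fun t : ℝ => ((x₀, Real.exp x₀ + t) : ℝ × ℝ)) ⁻¹' s i) :=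
      hopen.preimage hcont
    have h0 : (0 : ℝ) ∈ (fun t : ℝ => ((x₀, Real.exp x₀ + t) : ℝ × ℝ)) ⁻¹' s i := by
      simpa using hmem
    obtain ⟨δ, hδ, hballδ⟩ := Metric.isOpen_iff.1 hVopen 0 h0
    have ht : (δ / 2) ∈ (fun t : ℝ => ((x₀, Real.exp x₀ + t) : ℝ × ℝ)) ⁻¹' s i := by
      apply hballδ
      rw [Metric.mem_ball, Real.dist_eq]
      rw [sub_zero, abs_of_nonneg (by linarith)]
      linarith
    have hp'S : ((x₀, Real.exp x₀ + δ / 2) : ℝ × ℝ) ∈ S := by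
      rw [hS]
      exact mem_iUnion.2 ⟨i, ht⟩
    have : Real.exp x₀ + δ / 2 = Real.exp x₀ := hp'S.2
    linarith

theorem stmt_17 (f : ℝ → ℝ)
    (h : ∃ A : ℕ → Set (ℝ × ℝ), (∀ n, IsSemialgebraicR2 (A n)) ∧
      {p : ℝ × ℝ | p.2 = f p.1} = ⋃ n, A n) :
    (∃ a b : ℝ, a < b ∧
        IsSemialgebraicR2 {p : ℝ × ℝ | p.1 ∈ Set.Ioo a b ∧ p.2 = f p.1}) ∧
      f ≠ Real.exp := by
  refine ⟨part1 f h, ?_⟩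
  rintro rfl
  obtain ⟨a, b, hab, hsa⟩ := part1 Real.exp h
  exact exp_not_semialg a b hab hsa
end
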